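/- Let m, n ≥ 1, let A, B be m×n matrices with entries in ℝ∞ = ℝ ∪ {+∞}, and let S ⊆ {1, …, n}. Then exactly one of the following two statements holds: (1) there exists x ∈ ℝ∞^n with A ⊙ x ≤ B ⊙ x such that x_i is finite for every i ∈ S; (2) there exists y ∈ ℝ∞^m with B^T ⊙ y < A^T ⊙ y such that the i-th coordinate of B^T ⊙ y is finite for some i ∈ S. -/

import Mathlib

/-- The min-plus matrix-vector product over `ℝ∞ = ℝ ∪ {+∞}`:
`(A ⊙ x)_i = min_j (A_{ij} + x_j)`. -/
noncomputable def minPlusMul {m n : ℕ} (A : Fin m → Fin n → WithTop ℝ)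
    (x : Fin n → WithTop ℝ) (i : Fin m) : WithTop ℝ :=
  Finset.univ.inf (fun j => A i j + x j)

/-- Strict inequality of vectors over `ℝ∞`: in every coordinate either both sides are
`+∞` or the strict inequality holds. -/
def ltVec {m : ℕ} (u v : Fin m → WithTop ℝ) : Prop :=
  ∀ i, (u i = ⊤ ∧ v i = ⊤) ∨ u i < v i

open Finset
open scoped Classical

noncomputable section

namespace MPDual

abbrev E : Type := WithTop ℝ

/-! ### Generic helpers -/

lemma add_min' (a b c : E) : a + (b ⊓ c) = (a + b) ⊓ (a + c) := by
  rcases le_total b c with h | h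
  · rw [inf_eq_left.2 h, inf_eq_left.2 (add_le_add_right h a)]
  · rw [inf_eq_right.2 h, inf_eq_right.2 (add_le_add_right h a)]

lemma min_add' (b c a : E) : (b ⊓ c) + a = (b + a) ⊓ (c + a) := by
  rw [add_comm, add_min' a b c, add_comm a b, add_comm a c]

lemma add_finset_inf {σ : Type} (s : Finset σ) (c : E) (f : σ → E) :
    c + s.inf f = s.inf (fun j => c + f j) := by
  induction s using Finset.cons_induction with
  | empty => simp
  | cons a s ha ih => rw [Finset.inf_cons, Finset.inf_cons, add_min', ih]

lemma inf_swap' {σ τ : Type} (s : Finset σ) (t : Finset τ) (g : σ → τ → E) :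
    s.inf (fun a => t.inf (fun b => g a b)) = t.inf (fun b => s.inf (fun a => g a b)) := by
  apply le_antisymm
  · exact Finset.le_inf fun b hb => Finset.le_inf fun a ha =>
      le_trans (Finset.inf_le ha) (Finset.inf_le hb)
  · exact Finset.le_inf fun a ha => Finset.le_inf fun b hb =>
      le_trans (Finset.inf_le hb) (Finset.inf_le ha)

lemma inf_pair {σ : Type} (s : Finset σ) (f g : σ → E) :
    s.inf (fun j => f j ⊓ g j) = s.inf f ⊓ s.inf g := by
  apply le_antisymm
  · exact le_inf (Finset.le_inf fun j hj => le_trans (Finset.inf_le hj) inf_le_left)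
      (Finset.le_inf fun j hj => le_trans (Finset.inf_le hj) inf_le_right)
  · exact Finset.le_inf fun j hj =>
      le_inf (le_trans inf_le_left (Finset.inf_le hj))
        (le_trans inf_le_right (Finset.inf_le hj))

lemma inf_split {κ : Type} [Fintype κ] (c : κ) (f : κ → E) :
    Finset.univ.inf f = f c ⊓ Finset.univ.inf (fun j : {j : κ // j ≠ c} => f j.1) := by
  apply le_antisymm
  · exact le_inf (Finset.inf_le (Finset.mem_univ c))
      (Finset.le_inf fun j _ => Finset.inf_le (Finset.mem_univ j.1))
  · refine Finset.le_inf fun j _ => ?_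
    by_cases hj : j = c
    · subst hj; exact inf_le_left
    · exact le_trans inf_le_right (Finset.inf_le (Finset.mem_univ (⟨j, hj⟩ : {j : κ // j ≠ c})))

lemma exists_real_lb {σ : Type} (s : Finset σ) (f : σ → E) :
    ∃ r : ℝ, ∀ i ∈ s, (r : E) ≤ f i := by
  induction s using Finset.cons_induction with
  | empty => exact ⟨0, by simp⟩
  | cons a s ha ih =>
    obtain ⟨r, hr⟩ := ih
    rcases eq_or_ne (f a) ⊤ with h | h
    · refine ⟨r, fun i hi => ?_⟩
      rcases Finset.mem_cons.1 hi with rfl | hi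
      · simp [h]
      · exact hr i hi
    · obtain ⟨v, hv⟩ := WithTop.ne_top_iff_exists.1 h
      refine ⟨min r v, fun i hi => ?_⟩
      rcases Finset.mem_cons.1 hi with rfl | hi
      · rw [← hv]; exact_mod_cast min_le_right r v
      · exact le_trans (by exact_mod_cast min_le_left r v) (hr i hi)

lemma eta_single {u v : E} (h : u < v) (hv : v ≠ ⊤) :
    ∃ η : ℝ, η < 0 ∧ u < v + (η : E) := by
  obtain ⟨b, hb⟩ := WithTop.ne_top_iff_exists.1 hv
  have hu : u ≠ ⊤ := ne_top_of_lt h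
  obtain ⟨a, ha⟩ := WithTop.ne_top_iff_exists.1 hu
  have hab : a < b := by
    rw [← ha, ← hb] at h; exact_mod_cast h
  refine ⟨(a - b) / 2, by linarith, ?_⟩
  rw [← ha, ← hb, ← WithTop.coe_add]
  exact_mod_cast (by linarith : a < b + (a - b) / 2)

lemma exists_eta {σ : Type} (s : Finset σ) (P : σ → Prop) (u v : σ → E)
    (h : ∀ j ∈ s, P j → u j < v j ∧ v j ≠ ⊤) :
    ∃ η : ℝ, η < 0 ∧ ∀ j ∈ s, P j → u j < v j + (η : E) := by
  induction s using Finset.cons_induction with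
  | empty => exact ⟨-1, by norm_num, by simp⟩
  | cons a s ha ih =>
    obtain ⟨η₁, hη₁, h₁⟩ := ih (fun j hj => h j (Finset.mem_cons_of_mem hj))
    by_cases hPa : P a
    · obtain ⟨hlt, htop⟩ := h a (Finset.mem_cons_self a s) hPa
      obtain ⟨η₂, hη₂, h₂⟩ := eta_single hlt htop
      refine ⟨max η₁ η₂, max_lt hη₁ hη₂, fun j hj hPj => ?_⟩
      rcases Finset.mem_cons.1 hj with rfl | hj
      · exact lt_of_lt_of_le h₂ (add_le_add_right (by exact_mod_cast le_max_right η₁ η₂) _)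
      · exact lt_of_lt_of_le (h₁ j hj hPj) (add_le_add_right (by exact_mod_cast le_max_left η₁ η₂) _)
    · refine ⟨η₁, hη₁, fun j hj hPj => ?_⟩
      rcases Finset.mem_cons.1 hj with rfl | hj
      · exact absurd hPj hPa
      · exact h₁ j hj hPj

/-! ### The two statements -/

variable {ι κ : Type} [Fintype ι] [Fintype κ]

def mul (A : ι → κ → E) (x : κ → E) (i : ι) : E := Finset.univ.inf (fun j => A i j + x j)

def tr (A : ι → κ → E) : κ → ι → E := fun j i => A i j

def P1 (A B : ι → κ → E) (S : Set κ) : Prop :=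
  ∃ x : κ → E, (∀ i, mul A x i ≤ mul B x i) ∧ ∀ j ∈ S, x j ≠ ⊤

def P2 (A B : ι → κ → E) (S : Set κ) : Prop :=
  ∃ y : ι → E,
    (∀ j, (mul (tr B) y j = ⊤ ∧ mul (tr A) y j = ⊤) ∨ mul (tr B) y j < mul (tr A) y j) ∧
    ∃ j ∈ S, mul (tr B) y j ≠ ⊤

lemma mul_top (M : ι → κ → E) (i : ι) : mul M (fun _ => (⊤ : E)) i = ⊤ := by
  refine le_antisymm le_top (Finset.le_inf fun j _ => ?_)
  simp

/-! ### Mutual exclusion -/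

lemma exclusion (A B : ι → κ → E) (S : Set κ) (h1 : P1 A B S) (h2 : P2 A B S) : False := by
  obtain ⟨x, hx, hxS⟩ := h1
  obtain ⟨y, hy, j₀, hj₀, hj₀fin⟩ := h2
  have ac3 : ∀ a b c : E, a + (b + c) = c + (b + a) := by
    intro a b c; abel
  have swap : ∀ M : ι → κ → E,
      Finset.univ.inf (fun j => mul (tr M) y j + x j) =
      Finset.univ.inf (fun i => y i + mul M x i) := by
    intro M
    have e1 : ∀ j : κ, mul (tr M) y j + x j = Finset.univ.inf (fun i => y i + (M i j + x j)) := by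
      intro j
      rw [mul, add_comm, add_finset_inf]
      exact Finset.inf_congr rfl (fun i _ => ac3 (x j) (M i j) (y i))
    calc Finset.univ.inf (fun j => mul (tr M) y j + x j)
        = Finset.univ.inf (fun j => Finset.univ.inf (fun i => y i + (M i j + x j))) :=
          Finset.inf_congr rfl (fun j _ => e1 j)
      _ = Finset.univ.inf (fun i => Finset.univ.inf (fun j => y i + (M i j + x j))) :=
          inf_swap' _ _ _
      _ = Finset.univ.inf (fun i => y i + mul M x i) :=
          Finset.inf_congr rfl (fun i _ => (add_finset_inf _ _ _).symm)
  have hab : Finset.univ.inf (fun j => mul (tr A) y j + x j) ≤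
      Finset.univ.inf (fun j => mul (tr B) y j + x j) := by
    rw [swap A, swap B]
    exact Finset.le_inf fun i _ =>
      le_trans (Finset.inf_le (Finset.mem_univ i)) (add_le_add_right (hx i) (y i))
  have hβ : Finset.univ.inf (fun j => mul (tr B) y j + x j) < ⊤ := by
    refine lt_of_le_of_lt (Finset.inf_le (Finset.mem_univ j₀)) ?_
    exact lt_top_iff_ne_top.2 (WithTop.add_ne_top.2 ⟨hj₀fin, hxS j₀ hj₀⟩)
  obtain ⟨j₁, -, hj₁⟩ := Finset.exists_mem_eq_inf (Finset.univ : Finset κ)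
    ⟨j₀, Finset.mem_univ j₀⟩ (fun j => mul (tr A) y j + x j)
  rw [hj₁] at hab
  have h1top : mul (tr A) y j₁ ≠ ⊤ := by
    intro h
    rw [h, top_add] at hab
    exact lt_irrefl _ (lt_of_le_of_lt hab hβ)
  have h2top : x j₁ ≠ ⊤ := by
    intro h
    rw [h, add_top] at hab
    exact lt_irrefl _ (lt_of_le_of_lt hab hβ)
  have hstrict : mul (tr B) y j₁ < mul (tr A) y j₁ := by
    rcases hy j₁ with ⟨-, hA⟩ | h
    · exact absurd hA h1top
    · exact h
  have hle2 : Finset.univ.inf (fun j => mul (tr B) y j + x j) ≤ mul (tr B) y j₁ + x j₁ :=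
    Finset.inf_le (Finset.mem_univ j₁)
  have hstrict2 : mul (tr B) y j₁ + x j₁ < mul (tr A) y j₁ + x j₁ :=
    WithTop.add_lt_add_right h2top hstrict
  have hlt2 : Finset.univ.inf (fun j => mul (tr B) y j + x j) < mul (tr A) y j₁ + x j₁ :=
    lt_of_le_of_lt hle2 hstrict2
  exact lt_irrefl _ (lt_of_lt_of_le hlt2 hab)

/-! ### Closure of solutions under finite infima -/

lemma P1_of_forall_singleton (A B : ι → κ → E) (S : Set κ)
    (h : ∀ s ∈ S, P1 A B {s}) : P1 A B S := by
  have hF : ∀ s : κ, ∃ x : κ → E, (∀ i, mul A x i ≤ mul B x i) ∧ (s ∈ S → x s ≠ ⊤) := by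
    intro s
    by_cases hs : s ∈ S
    · obtain ⟨x, hx, hfin⟩ := h s hs
      exact ⟨x, hx, fun _ => hfin s rfl⟩
    · exact ⟨fun _ => ⊤, fun i => le_of_eq ((mul_top A i).trans (mul_top B i).symm),
        fun h' => absurd h' hs⟩
  choose F hFsol hFfin using hF
  refine ⟨fun j => Finset.univ.inf (fun s => F s j), fun i => ?_, fun j hj => ?_⟩
  · have key : ∀ M : ι → κ → E, mul M (fun j => Finset.univ.inf (fun s => F s j)) i =
        Finset.univ.inf (fun s => mul M (F s) i) := by
      intro M
      calc mul M (fun j => Finset.univ.inf (fun s => F s j)) i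
          = Finset.univ.inf (fun j => Finset.univ.inf (fun s => M i j + F s j)) :=
            Finset.inf_congr rfl (fun j _ => add_finset_inf _ _ _)
        _ = Finset.univ.inf (fun s => Finset.univ.inf (fun j => M i j + F s j)) :=
            inf_swap' _ _ _
        _ = Finset.univ.inf (fun s => mul M (F s) i) := rfl
    rw [key A, key B]
    exact Finset.le_inf fun s _ => le_trans (Finset.inf_le (Finset.mem_univ s)) (hFsol s i)
  · intro htop
    have hle : Finset.univ.inf (fun s => F s j) ≤ F j j := Finset.inf_le (Finset.mem_univ j)
    exact hFfin j hj (top_le_iff.1 (htop ▸ hle))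

/-! ### One step of column elimination -/

section Step

variable (A B : ι → κ → E) (c : κ)

/-- Rows giving a genuine lower bound on the eliminated variable. -/
def NN (i' : ι) : Prop := B i' c < A i' c

/-- The (finite) value of `B i' c` for rows in `NN`. -/
def bb (i' : ι) : ℝ := (WithTop.untopD 0 (B i' c))

lemma bb_spec {i' : ι} (h : NN A B c i') : B i' c = ((bb B c i' : ℝ) : E) := by
  have hne : B i' c ≠ ⊤ := ne_top_of_lt h
  obtain ⟨r, hr⟩ := WithTop.ne_top_iff_exists.1 hne
  rw [← hr]
  simp [bb, ← hr]

/-- Reduced `A`-matrix after eliminating column `c`. -/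
def rA : (ι ⊕ ι × ι) → {j : κ // j ≠ c} → E
  | Sum.inl i => fun j => if A i c = ⊤ then A i j.1 else ⊤
  | Sum.inr q => fun j =>
      if NN A B c q.2 then
        min (A q.1 j.1) (A q.1 c + ((-(bb B c q.2) : ℝ) : E) + A q.2 j.1)
      else ⊤

/-- Reduced `B`-matrix after eliminating column `c`. -/
def rB : (ι ⊕ ι × ι) → {j : κ // j ≠ c} → E
  | Sum.inl i => fun k => if A i c = ⊤ then B i k.1 else ⊤
  | Sum.inr q => fun k => if NN A B c q.2 then B q.1 k.1 else ⊤

variable {x' : {j : κ // j ≠ c} → E}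

lemma mul_rA_inl {i : ι} (h : A i c = ⊤) :
    mul (rA A B c) x' (Sum.inl i) =
      Finset.univ.inf (fun j : {j : κ // j ≠ c} => A i j.1 + x' j) :=
  Finset.inf_congr rfl (fun j _ => by simp [rA, h])

lemma mul_rB_inl {i : ι} (h : A i c = ⊤) :
    mul (rB A B c) x' (Sum.inl i) =
      Finset.univ.inf (fun k : {j : κ // j ≠ c} => B i k.1 + x' k) :=
  Finset.inf_congr rfl (fun k _ => by simp [rB, h])

lemma mul_rA_inr {q : ι × ι} (h : NN A B c q.2) :
    mul (rA A B c) x' (Sum.inr q) =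
      (Finset.univ.inf (fun j : {j : κ // j ≠ c} => A q.1 j.1 + x' j)) ⊓
      ((A q.1 c + ((-(bb B c q.2) : ℝ) : E)) +
        Finset.univ.inf (fun j : {j : κ // j ≠ c} => A q.2 j.1 + x' j)) := by
  rw [mul]
  have e1 : (fun j : {j : κ // j ≠ c} => rA A B c (Sum.inr q) j + x' j) =
      (fun j => (A q.1 j.1 + x' j) ⊓
        ((A q.1 c + ((-(bb B c q.2) : ℝ) : E)) + (A q.2 j.1 + x' j))) := by
    funext j
    simp only [rA, if_pos h]
    rw [min_add', add_assoc]
  rw [e1, inf_pair, ← add_finset_inf]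

lemma mul_rB_inr {q : ι × ι} (h : NN A B c q.2) :
    mul (rB A B c) x' (Sum.inr q) =
      Finset.univ.inf (fun k : {j : κ // j ≠ c} => B q.1 k.1 + x' k) :=
  Finset.inf_congr rfl (fun k _ => by simp [rB, h])

/-- A solution of the reduced system yields a solution of the original one. -/
lemma step_back (s₀ : κ) (hs₀ : s₀ ≠ c)
    (h : P1 (rA A B c) (rB A B c) {(⟨s₀, hs₀⟩ : {j : κ // j ≠ c})}) : P1 A B {s₀} := by
  obtain ⟨x', hSol, hfin⟩ := h
  set L : ι → E := fun i => Finset.univ.inf (fun j : {j : κ // j ≠ c} => A i j.1 + x' j) with hL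
  set LB : ι → E := fun i => Finset.univ.inf (fun k : {j : κ // j ≠ c} => B i k.1 + x' k) with hLB
  have hsolo : ∀ i, A i c = ⊤ → L i ≤ LB i := fun i h => by
    have := hSol (Sum.inl i)
    rwa [mul_rA_inl A B c h, mul_rB_inl A B c h] at this
  have hpair : ∀ q : ι × ι, NN A B c q.2 →
      L q.1 ⊓ ((A q.1 c + ((-(bb B c q.2) : ℝ) : E)) + L q.2) ≤ LB q.1 := fun q hq => by
    have := hSol (Sum.inr q)
    rwa [mul_rA_inr A B c hq, mul_rB_inr A B c hq] at this
  have main : ∀ u : E,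
      (∀ i, (A i c + u) ⊓ L i ≤ B i c + u) →
      (∀ i, (A i c + u) ⊓ L i ≤ LB i) →
      P1 A B {s₀} := by
    intro u hc hk
    refine ⟨fun j => if hj : j = c then u else x' ⟨j, hj⟩, fun i => ?_, fun j hj => ?_⟩
    · have hsplit : ∀ M : ι → κ → E, mul M (fun j => if hj : j = c then u else x' ⟨j, hj⟩) i
          = (M i c + u) ⊓ Finset.univ.inf (fun j : {j : κ // j ≠ c} => M i j.1 + x' j) := by
        intro M
        have h1 : (fun j : {j : κ // j ≠ c} =>
            M i j.1 + if hj : j.1 = c then u else x' ⟨j.1, hj⟩) =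
            (fun j : {j : κ // j ≠ c} => M i j.1 + x' j) := by
          funext j
          rw [dif_neg j.2, Subtype.coe_eta]
        rw [mul, inf_split c, dif_pos rfl, h1]
      rw [hsplit A, hsplit B]
      exact le_inf (hc i) (hk i)
    · have hj' : j = s₀ := hj
      subst hj'
      show (if hj : j = c then u else x' ⟨j, hj⟩) ≠ ⊤
      rw [dif_neg (hj ▸ hs₀ : j ≠ c)]
      exact hfin ⟨j, hj ▸ hs₀⟩ rfl
  by_cases hcase1 : ∃ i', NN A B c i' ∧ L i' = ⊤
  · obtain ⟨i'₀, hN₀, hL₀⟩ := hcase1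
    apply main ⊤
    · intro i
      rw [show B i c + (⊤ : E) = ⊤ from add_top _]
      exact le_top
    · intro i
      have hp := hpair (i, i'₀) hN₀
      rw [hL₀, add_top, inf_top_eq] at hp
      exact le_trans inf_le_right hp
  · push_neg at hcase1
    by_cases hcase2 : (Finset.univ.filter (fun i' => NN A B c i')).Nonempty
    · set Ns := Finset.univ.filter (fun i' => NN A B c i') with hNs
      set gq : ι → ℝ := fun i' => (WithTop.untopD 0 (L i')) - bb B c i' with hgq
      set u₀ : ℝ := Ns.sup' hcase2 gq with hu₀
      have hmemN : ∀ i' ∈ Ns, NN A B c i' := fun i' hi' => (Finset.mem_filter.1 hi').2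
      have hLcoe : ∀ i' ∈ Ns, L i' = (((WithTop.untopD 0 (L i')) : ℝ) : E) := by
        intro i' hi'
        have hne : L i' ≠ ⊤ := hcase1 i' (hmemN i' hi')
        obtain ⟨r, hr⟩ := WithTop.ne_top_iff_exists.1 hne
        rw [← hr, WithTop.untopD_coe]
      obtain ⟨i'₁, hi'₁, hmax⟩ := Finset.exists_mem_eq_sup' hcase2 gq
      apply main ((u₀ : ℝ) : E)
      · intro i
        by_cases hNi : NN A B c i
        · have hiNs : i ∈ Ns := Finset.mem_filter.2 ⟨Finset.mem_univ i, hNi⟩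
          refine le_trans inf_le_right ?_
          rw [bb_spec A B c hNi, hLcoe i hiNs, ← WithTop.coe_add]
          have hgle : gq i ≤ u₀ := Finset.le_sup' gq hiNs
          simp only [hgq] at hgle
          have : (WithTop.untopD 0 (L i)) ≤ bb B c i + u₀ := by linarith
          exact_mod_cast this
        · have hAB : A i c ≤ B i c := not_lt.1 hNi
          exact le_trans inf_le_left (add_le_add_left hAB _)
      · intro i
        have hN₁ : NN A B c i'₁ := hmemN i'₁ hi'₁
        have hp := hpair (i, i'₁) hN₁
        refine le_trans (le_of_eq ?_) hp
        rw [inf_comm]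
        congr 1
        rw [hLcoe i'₁ hi'₁, add_assoc, ← WithTop.coe_add]
        have hval : u₀ = -(bb B c i'₁) + (WithTop.untopD 0 (L i'₁)) := by
          rw [hu₀, hmax]
          simp only [hgq]
          ring
        rw [hval]
    · have hallN : ∀ i', ¬ NN A B c i' := by
        intro i' hN
        exact hcase2 ⟨i', Finset.mem_filter.2 ⟨Finset.mem_univ i', hN⟩⟩
      obtain ⟨r, hr⟩ := exists_real_lb (Finset.univ : Finset (ι × {j : κ // j ≠ c}))
        (fun p => if h : A p.1 c = ⊤ then ⊤
          else B p.1 p.2.1 + x' p.2 + ((-(WithTop.untopD 0 (A p.1 c)) : ℝ) : E))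
      apply main ((r : ℝ) : E)
      · intro i
        have hAB : A i c ≤ B i c := not_lt.1 (hallN i)
        exact le_trans inf_le_left (add_le_add_left hAB _)
      · intro i
        by_cases hA : A i c = ⊤
        · exact le_trans inf_le_right (hsolo i hA)
        · refine le_trans inf_le_left ?_
          refine Finset.le_inf fun k _ => ?_
          have hub := hr (i, k) (Finset.mem_univ _)
          rw [dif_neg hA] at hub
          obtain ⟨a, ha⟩ := WithTop.ne_top_iff_exists.1 hA
          have huntop : ((WithTop.untopD 0 (A i c))) = a := by rw [← ha, WithTop.untopD_coe]
          rw [huntop] at hub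
          rw [← ha]
          calc ((a : ℝ) : E) + ((r : ℝ) : E)
              ≤ ((a : ℝ) : E) + (B i k.1 + x' k + ((-a : ℝ) : E)) := add_le_add_right hub _
            _ = B i k.1 + x' k + (((-a : ℝ) : E) + ((a : ℝ) : E)) := by abel
            _ = B i k.1 + x' k := by
                rw [← WithTop.coe_add, neg_add_cancel, WithTop.coe_zero, add_zero]


/-- A strict dual certificate of the reduced system pulls back to the original system. -/
lemma step_pull (s₀ : κ) (hs₀ : s₀ ≠ c)
    (h : P2 (rA A B c) (rB A B c) {(⟨s₀, hs₀⟩ : {j : κ // j ≠ c})}) : P2 A B {s₀} := by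
  obtain ⟨ty, hltR, j₀, hj₀mem, hj₀fin⟩ := h
  have hj₀eq : j₀ = ⟨s₀, hs₀⟩ := hj₀mem
  subst hj₀eq
  obtain ⟨η, hη, hηp⟩ := exists_eta (Finset.univ : Finset {j : κ // j ≠ c})
      (fun j => mul (tr (rB A B c)) ty j < mul (tr (rA A B c)) ty j ∧
        mul (tr (rA A B c)) ty j ≠ ⊤)
      (fun j => mul (tr (rB A B c)) ty j) (fun j => mul (tr (rA A B c)) ty j)
      (fun j _ hP => hP)
  have hηle : ((η : ℝ) : E) ≤ 0 := by exact_mod_cast hη.le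
  have hdrop : ∀ v : E, v + ((η : ℝ) : E) ≤ v := fun v => by
    calc v + ((η : ℝ) : E) ≤ v + 0 := add_le_add_right hηle v
      _ = v := add_zero v
  set g : E := Finset.univ.inf
    (fun r : ι => if NN A B c r then A r c + ((-(bb B c r) : ℝ) : E) else ⊤) with hgdef
  set M : E := Finset.univ.inf
    (fun q : ι × ι => if NN A B c q.2 then A q.1 c + ty (Sum.inr q) else ⊤) with hMdef
  have hgpos : (0 : E) < g := by
    rw [hgdef, Finset.lt_inf_iff (by simp : (0:E) < ⊤)]
    intro r _
    show (0:E) < if NN A B c r then A r c + ((-(bb B c r) : ℝ) : E) else ⊤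
    by_cases hr : NN A B c r
    · rw [if_pos hr]
      rcases eq_or_ne (A r c) ⊤ with hA | hA
      · rw [hA, top_add]; exact (by simp : (0:E) < ⊤)
      · obtain ⟨a, ha⟩ := WithTop.ne_top_iff_exists.1 hA
        have hba : bb B c r < a := by
          have h1 := hr
          rw [NN, bb_spec A B c hr, ← ha] at h1
          exact_mod_cast h1
        rw [← ha, ← WithTop.coe_add]
        exact_mod_cast (by linarith : (0:ℝ) < a + -(bb B c r))
    · rw [if_neg hr]; exact (by simp : (0:E) < ⊤)
  set y : ι → E := fun r =>
    (if A r c = ⊤ then ty (Sum.inl r) else ⊤) ⊓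
    (Finset.univ.inf (fun i' : ι => if NN A B c i' then ty (Sum.inr (r, i')) else ⊤)) ⊓
    (if NN A B c r then
      Finset.univ.inf (fun i : ι => ty (Sum.inr (i, r)) + (A i c + ((η - bb B c r : ℝ) : E)))
    else ⊤) with hy
  have hcoesplit : ∀ r : ι, ((η - bb B c r : ℝ) : E) =
      ((-(bb B c r) : ℝ) : E) + ((η : ℝ) : E) := by
    intro r
    rw [← WithTop.coe_add]
    congr 1
    ring
  have y_le1 : ∀ r, A r c = ⊤ → y r ≤ ty (Sum.inl r) := fun r h => by
    simp only [hy]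
    refine le_trans inf_le_left (le_trans inf_le_left ?_)
    rw [if_pos h]
  have y_le2 : ∀ q : ι × ι, NN A B c q.2 → y q.1 ≤ ty (Sum.inr q) := fun q h => by
    simp only [hy]
    refine le_trans inf_le_left (le_trans inf_le_right ?_)
    refine le_trans (Finset.inf_le (Finset.mem_univ q.2)) ?_
    beta_reduce
    rw [if_pos h]
  have y_le3 : ∀ r, NN A B c r → ∀ i,
      y r ≤ ty (Sum.inr (i, r)) + (A i c + ((η - bb B c r : ℝ) : E)) := fun r h i => by
    simp only [hy]
    refine le_trans inf_le_right ?_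
    rw [if_pos h]
    exact Finset.inf_le (Finset.mem_univ i)
  have hyadd : ∀ (w : E) (r : ι), w + y r =
      (w + (if A r c = ⊤ then ty (Sum.inl r) else ⊤)) ⊓
      (w + Finset.univ.inf (fun i' : ι => if NN A B c i' then ty (Sum.inr (r, i')) else ⊤)) ⊓
      (w + (if NN A B c r then
        Finset.univ.inf (fun i : ι => ty (Sum.inr (i, r)) + (A i c + ((η - bb B c r : ℝ) : E)))
      else ⊤)) := by
    intro w r
    simp only [hy]
    rw [add_min', add_min']
  have PB1 : ∀ j : {j : κ // j ≠ c},
      mul (tr (rA A B c)) ty j + ((η : ℝ) : E) ≤ mul (tr A) y j.1 := by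
    intro j
    refine Finset.le_inf fun r _ => ?_
    show mul (tr (rA A B c)) ty j + ((η : ℝ) : E) ≤ A r j.1 + y r
    rw [hyadd (A r j.1) r]
    refine le_inf (le_inf ?_ ?_) ?_
    · by_cases hA : A r c = ⊤
      · rw [if_pos hA]
        refine le_trans (hdrop _) ?_
        refine le_trans (Finset.inf_le (f := fun p => tr (rA A B c) j p + ty p)
          (Finset.mem_univ (Sum.inl r))) ?_
        refine add_le_add_left (le_of_eq ?_) _
        show rA A B c (Sum.inl r) j = A r j.1
        simp [rA, hA]
      · rw [if_neg hA, add_top]; exact le_top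
    · rw [add_finset_inf]
      refine le_trans (hdrop _) (Finset.le_inf fun i' _ => ?_)
      beta_reduce
      by_cases hN : NN A B c i'
      · rw [if_pos hN]
        refine le_trans (Finset.inf_le (f := fun p => tr (rA A B c) j p + ty p)
          (Finset.mem_univ (Sum.inr (r, i')))) ?_
        refine add_le_add_left ?_ _
        show rA A B c (Sum.inr (r, i')) j ≤ A r j.1
        simp only [rA, if_pos hN]
        exact min_le_left _ _
      · rw [if_neg hN, add_top]; exact le_top
    · by_cases hN : NN A B c r
      · rw [if_pos hN, add_finset_inf]
        refine Finset.le_inf fun i _ => ?_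
        beta_reduce
        have h1 : mul (tr (rA A B c)) ty j ≤ rA A B c (Sum.inr (i, r)) j + ty (Sum.inr (i, r)) :=
          Finset.inf_le (Finset.mem_univ (Sum.inr (i, r)))
        have h2 : rA A B c (Sum.inr (i, r)) j ≤ A i c + ((-(bb B c r) : ℝ) : E) + A r j.1 := by
          simp only [rA, if_pos hN]
          exact min_le_right _ _
        have h3 : mul (tr (rA A B c)) ty j + ((η : ℝ) : E) ≤
            (A i c + ((-(bb B c r) : ℝ) : E) + A r j.1 + ty (Sum.inr (i, r))) + ((η : ℝ) : E) :=
          add_le_add_left (le_trans h1 (add_le_add_left h2 _)) _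
        refine le_trans h3 (le_of_eq ?_)
        rw [hcoesplit r]
        abel
      · rw [if_neg hN, add_top]; exact le_top
  have PB2 : ∀ j : {j : κ // j ≠ c}, mul (tr B) y j.1 ≤ mul (tr (rB A B c)) ty j := by
    intro j
    refine Finset.le_inf fun p _ => ?_
    rcases p with i | q
    · by_cases hA : A i c = ⊤
      · refine le_trans (Finset.inf_le (f := fun i => tr B j.1 i + y i)
          (Finset.mem_univ i)) ?_
        show B i j.1 + y i ≤ rB A B c (Sum.inl i) j + ty (Sum.inl i)
        rw [show rB A B c (Sum.inl i) j = B i j.1 from by simp [rB, hA]]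
        exact add_le_add_right (y_le1 i hA) _
      · show mul (tr B) y j.1 ≤ rB A B c (Sum.inl i) j + ty (Sum.inl i)
        rw [show rB A B c (Sum.inl i) j = ⊤ from by simp [rB, hA], top_add]
        exact le_top
    · by_cases hN : NN A B c q.2
      · refine le_trans (Finset.inf_le (f := fun i => tr B j.1 i + y i)
          (Finset.mem_univ q.1)) ?_
        show B q.1 j.1 + y q.1 ≤ rB A B c (Sum.inr q) j + ty (Sum.inr q)
        rw [show rB A B c (Sum.inr q) j = B q.1 j.1 from by simp [rB, hN]]
        exact add_le_add_right (y_le2 q hN) _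
      · show mul (tr B) y j.1 ≤ rB A B c (Sum.inr q) j + ty (Sum.inr q)
        rw [show rB A B c (Sum.inr q) j = ⊤ from by simp [rB, hN], top_add]
        exact le_top
  have hMle : ∀ q : ι × ι, NN A B c q.2 → M ≤ A q.1 c + ty (Sum.inr q) := fun q hq => by
    have h0 : (if NN A B c q.2 then A q.1 c + ty (Sum.inr q) else ⊤) =
        A q.1 c + ty (Sum.inr q) := if_pos hq
    rw [hMdef]
    exact le_trans (Finset.inf_le (Finset.mem_univ q)) (le_of_eq h0)
  have Ac_bound : ∀ r, M ⊓ (g + (M + ((η : ℝ) : E))) ≤ A r c + y r := by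
    intro r
    rw [hyadd (A r c) r]
    refine le_inf (le_inf ?_ ?_) ?_
    · by_cases hA : A r c = ⊤
      · rw [if_pos hA, hA, top_add]; exact le_top
      · rw [if_neg hA, add_top]; exact le_top
    · rw [add_finset_inf]
      refine le_trans inf_le_left (Finset.le_inf fun i' _ => ?_)
      beta_reduce
      by_cases hN : NN A B c i'
      · rw [if_pos hN]
        exact hMle (r, i') hN
      · rw [if_neg hN, add_top]; exact le_top
    · by_cases hN : NN A B c r
      · rw [if_pos hN, add_finset_inf]
        refine le_trans inf_le_right (Finset.le_inf fun i _ => ?_)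
        beta_reduce
        have hg2 : g ≤ A r c + ((-(bb B c r) : ℝ) : E) := by
          have h0 : (if NN A B c r then A r c + ((-(bb B c r) : ℝ) : E) else ⊤) =
              A r c + ((-(bb B c r) : ℝ) : E) := if_pos hN
          rw [hgdef]
          exact le_trans (Finset.inf_le (Finset.mem_univ r)) (le_of_eq h0)
        have hM2 : M ≤ A i c + ty (Sum.inr (i, r)) := hMle (i, r) hN
        have h4 : g + (M + ((η : ℝ) : E)) ≤
            (A r c + ((-(bb B c r) : ℝ) : E)) +
              ((A i c + ty (Sum.inr (i, r))) + ((η : ℝ) : E)) :=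
          add_le_add hg2 (add_le_add_left hM2 _)
        refine le_trans h4 (le_of_eq ?_)
        rw [hcoesplit r]
        abel
      · rw [if_neg hN, add_top]; exact le_top
  have Bc_bound : M ≠ ⊤ → mul (tr B) y c ≤ M + ((η : ℝ) : E) := by
    intro hM
    have hne : (Finset.univ : Finset (ι × ι)).Nonempty := by
      by_contra hny
      rw [Finset.not_nonempty_iff_eq_empty] at hny
      apply hM
      rw [hMdef, hny, Finset.inf_empty]
    obtain ⟨q, -, hq0⟩ := Finset.exists_mem_eq_inf (Finset.univ : Finset (ι × ι)) hne
      (fun q : ι × ι => if NN A B c q.2 then A q.1 c + ty (Sum.inr q) else ⊤)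
    have hq : M = if NN A B c q.2 then A q.1 c + ty (Sum.inr q) else ⊤ := by
      rw [hMdef]; exact hq0
    have hNq : NN A B c q.2 := by
      by_contra hnq
      rw [if_neg hnq] at hq
      exact hM hq
    rw [if_pos hNq] at hq
    have h1 : mul (tr B) y c ≤ B q.2 c + y q.2 :=
      Finset.inf_le (f := fun i => tr B c i + y i) (Finset.mem_univ q.2)
    have h2 : y q.2 ≤ ty (Sum.inr q) + (A q.1 c + ((η - bb B c q.2 : ℝ) : E)) :=
      y_le3 q.2 hNq q.1
    have hz : ((bb B c q.2 : ℝ) : E) + ((-(bb B c q.2) : ℝ) : E) = 0 := by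
      rw [← WithTop.coe_add]
      norm_num
    refine le_trans h1 (le_trans (add_le_add_right h2 _) (le_of_eq ?_))
    rw [bb_spec A B c hNq, hcoesplit q.2, hq]
    calc ((bb B c q.2 : ℝ) : E) +
          (ty (Sum.inr q) + (A q.1 c + (((-(bb B c q.2) : ℝ) : E) + ((η : ℝ) : E))))
        = (((bb B c q.2 : ℝ) : E) + ((-(bb B c q.2) : ℝ) : E)) +
            ((A q.1 c + ty (Sum.inr q)) + ((η : ℝ) : E)) := by abel
      _ = (A q.1 c + ty (Sum.inr q)) + ((η : ℝ) : E) := by rw [hz, zero_add]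
  refine ⟨y, ?_, s₀, rfl, ?_⟩
  · intro j
    by_cases hjc : j = c
    · subst hjc
      rcases eq_or_ne M ⊤ with hM | hM
      · have hA : mul (tr A) y j = ⊤ := by
          refine top_le_iff.1 (Finset.le_inf fun r _ => ?_)
          have hr := Ac_bound r
          rw [hM] at hr
          simpa [tr] using hr
        rcases eq_or_ne (mul (tr B) y j) ⊤ with hB | hB
        · exact Or.inl ⟨hB, hA⟩
        · exact Or.inr (by rw [hA]; exact lt_top_iff_ne_top.2 hB)
      · right
        have hBc := Bc_bound hM
        obtain ⟨mv, hmv⟩ := WithTop.ne_top_iff_exists.1 hM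
        have hMη : M + ((η : ℝ) : E) ≠ ⊤ := by
          rw [← hmv, ← WithTop.coe_add]
          exact WithTop.coe_ne_top
        have hlt1 : M + ((η : ℝ) : E) < M ⊓ (g + (M + ((η : ℝ) : E))) := by
          rw [lt_inf_iff]
          constructor
          · rw [← hmv, ← WithTop.coe_add]
            exact_mod_cast (by linarith : mv + η < mv)
          · have h5 := WithTop.add_lt_add_right hMη hgpos
            rwa [zero_add] at h5
        have hAc : M ⊓ (g + (M + ((η : ℝ) : E))) ≤ mul (tr A) y j :=
          Finset.le_inf fun r _ => Ac_bound r
        exact lt_of_le_of_lt hBc (lt_of_lt_of_le hlt1 hAc)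
    · rcases hltR ⟨j, hjc⟩ with ⟨hB, hA⟩ | hstr
      · have hA' : mul (tr A) y j = ⊤ := by
          have h6 := PB1 ⟨j, hjc⟩
          rw [hA, top_add] at h6
          exact top_le_iff.1 h6
        rcases eq_or_ne (mul (tr B) y j) ⊤ with hB' | hB'
        · exact Or.inl ⟨hB', hA'⟩
        · exact Or.inr (by rw [hA']; exact lt_top_iff_ne_top.2 hB')
      · right
        rcases eq_or_ne (mul (tr (rA A B c)) ty ⟨j, hjc⟩) ⊤ with hA | hA
        · have h6 := PB1 ⟨j, hjc⟩
          rw [hA, top_add] at h6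
          have hA' : mul (tr A) y j = ⊤ := top_le_iff.1 h6
          rw [hA'] at *
          rw [hA] at hstr
          exact lt_of_le_of_lt (PB2 ⟨j, hjc⟩) hstr
        · have hη' := hηp ⟨j, hjc⟩ (Finset.mem_univ _) ⟨hstr, hA⟩
          exact lt_of_le_of_lt (PB2 ⟨j, hjc⟩) (lt_of_lt_of_le hη' (PB1 ⟨j, hjc⟩))
  · intro htop
    have h8 := PB2 ⟨s₀, hs₀⟩
    rw [show ((⟨s₀, hs₀⟩ : {j : κ // j ≠ c}) : κ) = s₀ from rfl, htop] at h8
    exact hj₀fin (top_le_iff.1 h8)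

end Step


/-! ### The main induction on the number of columns -/

lemma main_sing (n : ℕ) : ∀ (ι κ : Type) [Fintype ι] [Fintype κ]
    (A B : ι → κ → E) (s₀ : κ),
    Fintype.card κ = n → ¬ P1 A B {s₀} → P2 A B {s₀} := by
  induction n with
  | zero =>
    intro ι κ _ _ A B s₀ hcard _
    haveI : Nonempty κ := ⟨s₀⟩
    exact absurd hcard Fintype.card_ne_zero
  | succ n ih =>
    intro ι κ _ _ A B s₀ hcard hP1
    rcases Nat.eq_zero_or_pos n with hn | hn
    · -- base case: a single column
      subst hn
      obtain ⟨a, ha⟩ := Fintype.card_eq_one_iff.1 hcard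
      have huniq : ∀ j : κ, j = s₀ := fun j => by rw [ha j, ha s₀]
      have hone : ∀ (M : ι → κ → E) (x : κ → E) (i : ι), mul M x i = M i s₀ + x s₀ := by
        intro M x i
        refine le_antisymm (Finset.inf_le (Finset.mem_univ s₀)) (Finset.le_inf fun j _ => ?_)
        rw [huniq j]
      have hex : ∃ i, B i s₀ < A i s₀ := by
        by_contra hA
        push_neg at hA
        refine hP1 ⟨fun _ => (0 : E), fun i => ?_, fun j _ => ?_⟩
        · rw [hone A, hone B]
          exact add_le_add_left (hA i) 0
        · simp
      obtain ⟨i₀, hi₀⟩ := hex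
      refine ⟨fun i => if i = i₀ then 0 else ⊤, ?_, s₀, rfl, ?_⟩
      · have hBv : mul (tr B) (fun i => if i = i₀ then (0 : E) else ⊤) s₀ = B i₀ s₀ := by
          apply le_antisymm
          · refine le_trans (Finset.inf_le
              (f := fun i => tr B s₀ i + if i = i₀ then (0 : E) else ⊤)
              (Finset.mem_univ i₀)) ?_
            show B i₀ s₀ + (if i₀ = i₀ then (0 : E) else ⊤) ≤ B i₀ s₀
            rw [if_pos rfl, add_zero]
          · refine Finset.le_inf fun i _ => ?_
            show B i₀ s₀ ≤ B i s₀ + (if i = i₀ then (0 : E) else ⊤)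
            by_cases hi : i = i₀
            · subst hi; rw [if_pos rfl, add_zero]
            · rw [if_neg hi, add_top]; exact le_top
        have hAv : mul (tr A) (fun i => if i = i₀ then (0 : E) else ⊤) s₀ = A i₀ s₀ := by
          apply le_antisymm
          · refine le_trans (Finset.inf_le
              (f := fun i => tr A s₀ i + if i = i₀ then (0 : E) else ⊤)
              (Finset.mem_univ i₀)) ?_
            show A i₀ s₀ + (if i₀ = i₀ then (0 : E) else ⊤) ≤ A i₀ s₀
            rw [if_pos rfl, add_zero]
          · refine Finset.le_inf fun i _ => ?_
            show A i₀ s₀ ≤ A i s₀ + (if i = i₀ then (0 : E) else ⊤)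
            by_cases hi : i = i₀
            · subst hi; rw [if_pos rfl, add_zero]
            · rw [if_neg hi, add_top]; exact le_top
        intro j
        rw [huniq j]
        right
        rw [hBv, hAv]
        exact hi₀
      · have hBv : mul (tr B) (fun i => if i = i₀ then (0 : E) else ⊤) s₀ ≤ B i₀ s₀ := by
          refine le_trans (Finset.inf_le
            (f := fun i => tr B s₀ i + if i = i₀ then (0 : E) else ⊤)
            (Finset.mem_univ i₀)) ?_
          show B i₀ s₀ + (if i₀ = i₀ then (0 : E) else ⊤) ≤ B i₀ s₀
          rw [if_pos rfl, add_zero]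
        intro htop
        rw [htop] at hBv
        exact ne_top_of_lt hi₀ (top_le_iff.1 hBv)
    · -- inductive step: eliminate a column `c ≠ s₀`
      have h2 : 1 < Fintype.card κ := by rw [hcard]; omega
      obtain ⟨c, hc⟩ := Fintype.exists_ne_of_one_lt_card h2 s₀
      have hs₀c : s₀ ≠ c := hc.symm
      have hcard' : Fintype.card {j : κ // j ≠ c} = n := by
        have h3 := Fintype.card_subtype_compl (fun j : κ => j = c)
        rw [Fintype.card_subtype_eq, hcard] at h3
        have h4 : Fintype.card {j : κ // j ≠ c} = n + 1 - 1 := h3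
        omega
      have hred : ¬ P1 (rA A B c) (rB A B c) {(⟨s₀, hs₀c⟩ : {j : κ // j ≠ c})} :=
        fun hfeas => hP1 (step_back A B c s₀ hs₀c hfeas)
      exact step_pull A B c s₀ hs₀c
        (ih (ι ⊕ ι × ι) {j : κ // j ≠ c} (rA A B c) (rB A B c) ⟨s₀, hs₀c⟩ hcard' hred)

/-! ### The general duality theorem -/

theorem xor_thm (A B : ι → κ → E) (S : Set κ) : Xor' (P1 A B S) (P2 A B S) := by
  by_cases h1 : P1 A B S
  · exact Or.inl ⟨h1, fun h2 => exclusion A B S h1 h2⟩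
  · refine Or.inr ⟨?_, h1⟩
    have hall : ¬ ∀ s ∈ S, P1 A B {s} := fun hs => h1 (P1_of_forall_singleton A B S hs)
    push_neg at hall
    obtain ⟨s₀, hs₀S, hns₀⟩ := hall
    obtain ⟨y, hy, j, hjmem, hjfin⟩ :=
      main_sing (Fintype.card κ) ι κ A B s₀ rfl hns₀
    have hj : j = s₀ := hjmem
    subst hj
    exact ⟨y, hy, j, hs₀S, hjfin⟩

end MPDual

/-- **Min-plus linear duality (first form)** : for matrices `A, B` over `ℝ∞` and a subset
`S` of columns, exactly one of the following holds: (1) there is a solution of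
`A ⊙ x ≤ B ⊙ x` with `x_i` finite for every `i ∈ S`; (2) there is a solution of
`Bᵀ ⊙ y < Aᵀ ⊙ y` such that the `i`-th coordinate of `Bᵀ ⊙ y` is finite for some
`i ∈ S`. -/
theorem minplus_linear_duality_forall (m n : ℕ) (hm : 0 < m) (hn : 0 < n)
    (A B : Fin m → Fin n → WithTop ℝ) (S : Set (Fin n)) :
    Xor'
      (∃ x : Fin n → WithTop ℝ,
        (∀ i : Fin m, minPlusMul A x i ≤ minPlusMul B x i) ∧ ∀ i ∈ S, x i ≠ ⊤)
      (∃ y : Fin m → WithTop ℝ,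
        ltVec (minPlusMul (fun j i => B i j) y) (minPlusMul (fun j i => A i j) y) ∧
        ∃ i ∈ S, minPlusMul (fun j i => B i j) y i ≠ ⊤) := by
  exact MPDual.xor_thm A B S
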